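/- arXiv:0906.1888 — 2 statements merged into one kernel-verified Lean document; each statement's English description precedes it below -/
import Mathlib

section
/- Let θ₁, θ₂ ∈ ℝ. As w ranges over the quaternions with |w| = 1, the minimum of the real quantity T(w) = e^{iθ₁} w e^{−iθ₂} w̄ + w e^{iθ₂} w̄ e^{−iθ₁} equals min{2cos(θ₁ − θ₂), 2cos(θ₁ + θ₂)}; in particular the minimum is 2cos(θ₁ + θ₂) if cos(θ₁ − θ₂) ≥ cos(θ₁ + θ₂), and 2cos(θ₁ − θ₂) otherwise. -/
open Quaternion

/-- The quaternion `e^{iθ} = cos θ + (sin θ)·i`. -/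
noncomputable def expI (θ : ℝ) : ℍ[ℝ] := ⟨Real.cos θ, Real.sin θ, 0, 0⟩

/-- The set of values of the (real) quantity
`T(w) = e^{iθ₁} w e^{−iθ₂} w̄ + w e^{iθ₂} w̄ e^{−iθ₁}` as `w` ranges over unit quaternions. -/
noncomputable def Tset (θ₁ θ₂ : ℝ) : Set ℝ :=
  {r : ℝ | ∃ w : ℍ[ℝ], ‖w‖ = 1 ∧
    r = (expI θ₁ * w * expI (-θ₂) * star w + w * expI θ₂ * star w * expI (-θ₁)).re}

/-- The quaternion unit `j`. -/
noncomputable def jq : ℍ[ℝ] := ⟨0,0,1,0⟩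

lemma key (θ₁ θ₂ : ℝ) (w : ℍ[ℝ]) (h : w.re^2 + w.imI^2 + w.imJ^2 + w.imK^2 = 1) :
    (expI θ₁ * w * expI (-θ₂) * star w + w * expI θ₂ * star w * expI (-θ₁)).re
    = 2 * (Real.cos θ₁ * Real.cos θ₂ + Real.sin θ₁ * Real.sin θ₂ *
        (w.re^2 + w.imI^2 - w.imJ^2 - w.imK^2)) := by
  simp only [Quaternion.re_add, Quaternion.re_mul, Quaternion.re_star,
    Quaternion.imI_star, Quaternion.imJ_star, Quaternion.imK_star,
    Quaternion.imI_mul, Quaternion.imJ_mul, Quaternion.imK_mul]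
  simp only [expI, Real.cos_neg, Real.sin_neg]
  linear_combination (2*Real.cos θ₁*Real.cos θ₂) * h

lemma normsq (w : ℍ[ℝ]) (h : ‖w‖ = 1) : w.re^2 + w.imI^2 + w.imJ^2 + w.imK^2 = 1 := by
  have h1 := Quaternion.normSq_def' w
  have h2 := Quaternion.normSq_eq_norm_mul_self w
  rw [h] at h2
  nlinarith [h1, h2]

theorem stmt2 (θ₁ θ₂ : ℝ) :
    IsLeast (Tset θ₁ θ₂) (min (2 * Real.cos (θ₁ - θ₂)) (2 * Real.cos (θ₁ + θ₂)))
    ∧ (Real.cos (θ₁ + θ₂) ≤ Real.cos (θ₁ - θ₂) →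
        IsLeast (Tset θ₁ θ₂) (2 * Real.cos (θ₁ + θ₂)))
    ∧ (Real.cos (θ₁ - θ₂) < Real.cos (θ₁ + θ₂) →
        IsLeast (Tset θ₁ θ₂) (2 * Real.cos (θ₁ - θ₂))) := by
  have hmem1 : (2 * Real.cos (θ₁ - θ₂)) ∈ Tset θ₁ θ₂ := by
    refine ⟨1, by simp, ?_⟩
    rw [key θ₁ θ₂ 1 (by simp), Real.cos_sub]
    simp
  have hmem2 : (2 * Real.cos (θ₁ + θ₂)) ∈ Tset θ₁ θ₂ := by
    have hn : jq.re^2 + jq.imI^2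
        + jq.imJ^2 + jq.imK^2 = 1 := by norm_num [jq]
    refine ⟨jq, ?_, ?_⟩
    · have h1 := Quaternion.normSq_def' jq
      have h2 := Quaternion.normSq_eq_norm_mul_self jq
      have h3 : ‖jq‖ * ‖jq‖ = 1 := by rw [← h2, h1]; norm_num [jq]
      nlinarith [norm_nonneg jq, h3]
    · rw [key θ₁ θ₂ _ hn, Real.cos_add]
      norm_num [jq]
      ring
  have hlb : ∀ r ∈ Tset θ₁ θ₂,
      min (2 * Real.cos (θ₁ - θ₂)) (2 * Real.cos (θ₁ + θ₂)) ≤ r := by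
    rintro r ⟨w, hw, rfl⟩
    have hn := normsq w hw
    rw [key θ₁ θ₂ w hn]
    have h1 : w.re^2 + w.imI^2 - w.imJ^2 - w.imK^2 ≤ 1 := by
      nlinarith [sq_nonneg w.imJ, sq_nonneg w.imK]
    have h2 : -1 ≤ w.re^2 + w.imI^2 - w.imJ^2 - w.imK^2 := by
      nlinarith [sq_nonneg w.re, sq_nonneg w.imI]
    rw [Real.cos_sub, Real.cos_add]
    rcases le_or_gt 0 (Real.sin θ₁ * Real.sin θ₂) with hs | hs
    · refine le_trans (min_le_right _ _) ?_
      nlinarith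
    · refine le_trans (min_le_left _ _) ?_
      nlinarith
  refine ⟨⟨?_, hlb⟩, fun h => ⟨hmem2, fun r hr => ?_⟩, fun h => ⟨hmem1, fun r hr => ?_⟩⟩
  · rcases le_total (2 * Real.cos (θ₁ - θ₂)) (2 * Real.cos (θ₁ + θ₂)) with h | h
    · rw [min_eq_left h]; exact hmem1
    · rw [min_eq_right h]; exact hmem2
  · have hm : min (2 * Real.cos (θ₁ - θ₂)) (2 * Real.cos (θ₁ + θ₂))
        = 2 * Real.cos (θ₁ + θ₂) := min_eq_right (by linarith)
    exact hm ▸ hlb r hr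
  · have hm : min (2 * Real.cos (θ₁ - θ₂)) (2 * Real.cos (θ₁ + θ₂))
        = 2 * Real.cos (θ₁ - θ₂) := min_eq_left (by linarith)
    exact hm ▸ hlb r hr
end

section
/- Let h ∈ Sp(n,1), let g = diag(λ₁, …, λₙ, λ_{n+1}) with each |λᵢ| = 1, and set δ = max_{1≤i≤n} sup{ |u λᵢ u⁻¹ − w λ_{n+1} w⁻¹|² : u, w ∈ ℍ \ {0} }. Define h₀ = h and h_{k+1} = h_k g h_k⁻¹, with block form h_k = [[A^{(k)}, α^{(k)}],[β^{(k)}, a^{(k)}]]. If |a^{(0)}|²·δ < 1, then for every k ≥ 0 one has |a^{(k)}|² − 1 ≤ (|a^{(0)}|² − 1)·(|a^{(0)}|²·δ)^k; consequently |a^{(k)}| → 1, β^{(k)} → 0 and α^{(k)} → 0 as k → ∞. -/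
open Quaternion Matrix Filter

section Aux

open scoped RealInnerProductSpace

/-! ### Auxiliary facts -/

theorem quat_coe_sum {ι : Type*} (s : Finset ι) (f : ι → ℝ) :
    ((∑ i ∈ s, f i : ℝ) : ℍ[ℝ]) = ∑ i ∈ s, ((f i : ℝ) : ℍ[ℝ]) := by
  induction s using Finset.cons_induction with
  | empty => simp
  | cons a s ha ih => simp [Finset.sum_cons, ih]

variable {D : Type*} [DivisionRing D] {m : Type*} [Fintype m] [DecidableEq m]

noncomputable def unopLin (D : Type*) [DivisionRing D] : Dᵐᵒᵖ →ₗ[Dᵐᵒᵖ] D where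
  toFun := MulOpposite.unop
  map_add' := fun _ _ => rfl
  map_smul' := fun c x => by
    simp [MulOpposite.smul_eq_mul_unop]

instance : Module.Finite Dᵐᵒᵖ D :=
  Module.Finite.of_surjective (unopLin D) (fun x => ⟨MulOpposite.op x, rfl⟩)

noncomputable def mulVecOpLin (M : Matrix m m D) : (m → D) →ₗ[Dᵐᵒᵖ] (m → D) where
  toFun := M.mulVec
  map_add' := fun u v => Matrix.mulVec_add M u v
  map_smul' := fun c v => by
    funext i
    simp [Matrix.mulVec, dotProduct, MulOpposite.smul_eq_mul_unop, Finset.sum_mul,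
      mul_assoc]

/-- Over a division ring, a one-sided matrix inverse is two-sided. -/
theorem matrix_mul_eq_one_comm' {A B : Matrix m m D} (h : A * B = 1) : B * A = 1 := by
  have hcomp : ∀ v, A.mulVec (B.mulVec v) = v := by
    intro v; rw [Matrix.mulVec_mulVec, h, Matrix.one_mulVec]
  have hinj : Function.Injective (mulVecOpLin B) := by
    intro u v huv
    have := congrArg A.mulVec huv
    simpa [mulVecOpLin, hcomp] using this
  have hsurj : Function.Surjective (mulVecOpLin B) :=
    LinearMap.injective_iff_surjective.mp hinj
  choose v hv using fun j => hsurj (Pi.single j 1)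
  have hBC : B * Matrix.of (fun i j => v j i) = 1 := by
    ext i j
    have := congrFun (hv j) i
    simpa [mulVecOpLin, Matrix.mul_apply, Matrix.mulVec, dotProduct, Matrix.one_apply,
      Pi.single_apply, eq_comm] using this
  have hAC : A = Matrix.of (fun i j => v j i) := by
    calc A = A * (B * Matrix.of (fun i j => v j i)) := by rw [hBC, mul_one]
    _ = (A * B) * Matrix.of (fun i j => v j i) := by rw [mul_assoc]
    _ = Matrix.of (fun i j => v j i) := by rw [h, one_mul]
  rw [hAC] at *
  exact hBC

/-- The key quaternionic inequality for one conjugation step. -/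
theorem quat_est {n : ℕ} (a : ℍ[ℝ]) (β : Fin n → ℍ[ℝ]) (μ : ℍ[ℝ]) (lami : Fin n → ℍ[ℝ])
    (hμ : ‖μ‖ = 1) (hlm : ∀ i, ‖lami i‖ = 1)
    (hnorm : ‖a‖ ^ 2 - ∑ i, ‖β i‖ ^ 2 = 1)
    (δ : ℝ)
    (hδi : ∀ i, β i ≠ 0 → ‖a * μ * a⁻¹ - β i * lami i * (β i)⁻¹‖ ^ 2 ≤ δ) :
    ‖a * μ * star a - ∑ i, β i * lami i * star (β i)‖ ^ 2 - 1
      ≤ ‖a‖ ^ 2 * δ * (‖a‖ ^ 2 - 1) := by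
  set S : ℝ := ∑ i, ‖β i‖ ^ 2 with hSdef
  have hS0 : 0 ≤ S := Finset.sum_nonneg fun i _ => sq_nonneg _
  have ha2 : ‖a‖ ^ 2 = 1 + S := by linarith
  have ha : a ≠ 0 := by
    intro h0
    rw [h0, norm_zero] at ha2
    nlinarith
  set c : ℍ[ℝ] := a * μ * star a with hcdef
  set b : Fin n → ℍ[ℝ] := fun i => β i * lami i * star (β i) with hbdef
  set T : ℍ[ℝ] := ∑ i, b i with hTdef
  have hnc : ‖c‖ = ‖a‖ ^ 2 := by
    rw [hcdef, norm_mul, norm_mul, norm_star, hμ]; ring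
  have hnb : ∀ i, ‖b i‖ = ‖β i‖ ^ 2 := fun i => by
    rw [hbdef]; rw [norm_mul, norm_mul, norm_star, hlm]; ring
  have hT : ‖T‖ ≤ S := by
    refine (norm_sum_le _ _).trans ?_
    rw [hSdef]
    exact Finset.sum_le_sum fun i _ => (hnb i).le
  have hT2 : ‖T‖ ^ 2 ≤ S ^ 2 := by nlinarith [norm_nonneg T]
  have key : ∀ i, ‖a‖ ^ 2 * ‖β i‖ ^ 2 - ⟪c, b i⟫ ≤ ‖a‖ ^ 2 * ‖β i‖ ^ 2 * (δ / 2) := by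
    intro i
    by_cases hβ : β i = 0
    · simp [hbdef, hβ]
    · set x : ℍ[ℝ] := a * μ * a⁻¹ with hxdef
      set y : ℍ[ℝ] := β i * lami i * (β i)⁻¹ with hydef
      have hxn : ‖x‖ = 1 := by
        rw [hxdef, norm_mul, norm_mul, hμ, norm_inv]
        field_simp [norm_ne_zero_iff.mpr ha]
      have hyn : ‖y‖ = 1 := by
        rw [hydef, norm_mul, norm_mul, hlm, norm_inv]
        field_simp [norm_ne_zero_iff.mpr hβ]
      have hstar : star a = a⁻¹ * ((normSq a : ℝ) : ℍ[ℝ]) := by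
        rw [← Quaternion.self_mul_star a, ← mul_assoc, inv_mul_cancel₀ ha, one_mul]
      have hstarβ : star (β i) = (β i)⁻¹ * ((normSq (β i) : ℝ) : ℍ[ℝ]) := by
        rw [← Quaternion.self_mul_star (β i), ← mul_assoc, inv_mul_cancel₀ hβ, one_mul]
      have hc : c = (normSq a : ℝ) • x := by
        rw [hcdef, hxdef, hstar, ← mul_assoc, Quaternion.mul_coe_eq_smul]
      have hb : b i = (normSq (β i) : ℝ) • y := by
        show β i * lami i * star (β i) = _
        rw [hydef, hstarβ, ← mul_assoc, Quaternion.mul_coe_eq_smul]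
      have hinner : ⟪c, b i⟫ = normSq a * normSq (β i) * ⟪x, y⟫ := by
        rw [hc, hb, real_inner_smul_left, real_inner_smul_right]; ring
      have hxy : 2 - 2 * ⟪x, y⟫ = ‖x - y‖ ^ 2 := by
        rw [norm_sub_sq_real, hxn, hyn]; ring
      have hδ' : ‖x - y‖ ^ 2 ≤ δ := hδi i hβ
      have hnsa : normSq a = ‖a‖ ^ 2 := by
        rw [Quaternion.normSq_eq_norm_mul_self]; ring
      have hnsβ : normSq (β i) = ‖β i‖ ^ 2 := by
        rw [Quaternion.normSq_eq_norm_mul_self]; ring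
      rw [hinner, hnsa, hnsβ]
      nlinarith [sq_nonneg (‖a‖ * ‖β i‖), norm_nonneg a, norm_nonneg (β i),
        sq_nonneg ‖a‖, sq_nonneg ‖β i‖, mul_nonneg (sq_nonneg ‖a‖) (sq_nonneg ‖β i‖)]
  have hsum : ‖a‖ ^ 2 * S - ⟪c, T⟫ ≤ ‖a‖ ^ 2 * S * (δ / 2) := by
    have h1 : ⟪c, T⟫ = ∑ i, ⟪c, b i⟫ := by rw [hTdef, inner_sum]
    have h2 : ∑ i, (‖a‖ ^ 2 * ‖β i‖ ^ 2 - ⟪c, b i⟫)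
        ≤ ∑ i, ‖a‖ ^ 2 * ‖β i‖ ^ 2 * (δ / 2) := Finset.sum_le_sum fun i _ => key i
    rw [Finset.sum_sub_distrib] at h2
    have h3 : ∑ i, ‖a‖ ^ 2 * ‖β i‖ ^ 2 = ‖a‖ ^ 2 * S := by
      rw [hSdef, Finset.mul_sum]
    have h4 : ∑ i, ‖a‖ ^ 2 * ‖β i‖ ^ 2 * (δ / 2) = ‖a‖ ^ 2 * S * (δ / 2) := by
      rw [Finset.mul_sum, Finset.sum_mul]
    rw [h3, h4] at h2
    linarith [h2, h1.ge, h1.le]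
  have hexp : ‖c - T‖ ^ 2 = ‖c‖ ^ 2 - 2 * ⟪c, T⟫ + ‖T‖ ^ 2 := norm_sub_sq_real c T
  have h1 : ‖c‖ ^ 2 = (1 + S) ^ 2 := by rw [hnc, ha2]
  have e1 : ‖c - T‖ ^ 2 = (1 + S) ^ 2 - 2 * ⟪c, T⟫ + ‖T‖ ^ 2 := by rw [hexp, h1]
  rw [ha2] at hsum ⊢
  nlinarith [e1, hsum, hT2]

end Aux

/-- The Hermitian form `J = diag(1,…,1,−1)` on `ℍ^{n,1}`, as an `(n+1)×(n+1)`
quaternionic matrix indexed by `Fin n ⊕ Unit`. -/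
noncomputable def Jm (n : ℕ) : Matrix (Fin n ⊕ Unit) (Fin n ⊕ Unit) ℍ[ℝ] :=
  Matrix.fromBlocks 1 0 0 (-1)

/-- `Sp(n,1)`: the quaternionic matrices `g` with `g* J g = J`. -/
noncomputable def Sp (n : ℕ) : Set (Matrix (Fin n ⊕ Unit) (Fin n ⊕ Unit) ℍ[ℝ]) :=
  {g | gᴴ * Jm n * g = Jm n}

noncomputable def ee (n : ℕ) : Fin n ⊕ Unit → ℍ[ℝ] := Sum.elim (fun _ => 1) (fun _ => -1)

lemma Jm_diag (n : ℕ) : Jm n = Matrix.diagonal (ee n) := by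
  refine Matrix.ext fun i j => ?_
  rcases i with i | i <;> rcases j with j | j <;>
    simp [Jm, ee, Matrix.diagonal_apply, Matrix.one_apply, Sum.inl.injEq]

lemma Jm_mul_Jm (n : ℕ) : Jm n * Jm n = 1 := by
  rw [Jm_diag, Matrix.diagonal_mul_diagonal]
  have : (fun i => ee n i * ee n i) = fun _ => (1 : ℍ[ℝ]) := by
    funext j; rcases j with j | j <;> simp [ee]
  rw [this, Matrix.diagonal_one]

lemma Jm_conjT (n : ℕ) : (Jm n)ᴴ = Jm n := by
  rw [Jm_diag, Matrix.diagonal_conjTranspose]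
  refine congrArg _ (funext fun j => ?_)
  rcases j with j | j <;> simp [ee, Pi.star_apply]

lemma diag_unitary₁ {n : ℕ} (lam : Fin n ⊕ Unit → ℍ[ℝ]) (hlam : ∀ i, ‖lam i‖ = 1) :
    (Matrix.diagonal lam)ᴴ * Jm n * Matrix.diagonal lam = Jm n := by
  have hns : ∀ j, star (lam j) * lam j = 1 := fun j => by
    rw [Quaternion.star_mul_self, Quaternion.normSq_eq_norm_mul_self, hlam]
    norm_num
  rw [Jm_diag, Matrix.diagonal_conjTranspose, Matrix.diagonal_mul_diagonal,
    Matrix.diagonal_mul_diagonal]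
  refine congrArg _ (funext fun j => ?_)
  rcases j with j | j <;>
    simp only [ee, Pi.star_apply, Sum.elim_inl, Sum.elim_inr, mul_one, mul_neg_one]
  · exact hns _
  · rw [neg_mul, hns]

lemma diag_unitary₂ {n : ℕ} (lam : Fin n ⊕ Unit → ℍ[ℝ]) (hlam : ∀ i, ‖lam i‖ = 1) :
    Matrix.diagonal lam * Jm n * (Matrix.diagonal lam)ᴴ = Jm n := by
  have hns : ∀ j, lam j * star (lam j) = 1 := fun j => by
    rw [Quaternion.self_mul_star, Quaternion.normSq_eq_norm_mul_self, hlam]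
    norm_num
  rw [Jm_diag, Matrix.diagonal_conjTranspose, Matrix.diagonal_mul_diagonal,
    Matrix.diagonal_mul_diagonal]
  refine congrArg _ (funext fun j => ?_)
  rcases j with j | j <;>
    simp only [ee, Pi.star_apply, Sum.elim_inl, Sum.elim_inr, mul_one, mul_neg_one]
  · exact hns _
  · rw [neg_mul, hns]

/-- row identity : if `M J Mᴴ = J` then `∑ ‖β i‖² = ‖a‖² - 1`. -/
lemma row_sum {n : ℕ} {M : Matrix (Fin n ⊕ Unit) (Fin n ⊕ Unit) ℍ[ℝ]}
    (hM : M * Jm n * Mᴴ = Jm n) :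
    ∑ i : Fin n, ‖M (Sum.inr ()) (Sum.inl i)‖ ^ 2 = ‖M (Sum.inr ()) (Sum.inr ())‖ ^ 2 - 1 := by
  have h0 := congrFun (congrFun hM (Sum.inr ())) (Sum.inr ())
  rw [Jm_diag] at h0
  rw [Matrix.mul_apply] at h0
  simp only [Matrix.mul_diagonal, Matrix.conjTranspose_apply, Matrix.diagonal_apply_eq] at h0
  rw [Fintype.sum_sum_type] at h0
  simp only [ee, Sum.elim_inl, Sum.elim_inr, mul_one, mul_neg_one, neg_mul,
    Fintype.sum_unique, PUnit.default_eq_unit] at h0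
  have h1 : ∀ i : Fin n, M (Sum.inr ()) (Sum.inl i) * star (M (Sum.inr ()) (Sum.inl i))
      = ((normSq (M (Sum.inr ()) (Sum.inl i)) : ℝ) : ℍ[ℝ]) := fun i =>
    Quaternion.self_mul_star _
  rw [Finset.sum_congr rfl (fun i _ => h1 i)] at h0
  have hsa : M (Sum.inr ()) (Sum.inr ()) * star (M (Sum.inr ()) (Sum.inr ()))
      = ((normSq (M (Sum.inr ()) (Sum.inr ())) : ℝ) : ℍ[ℝ]) := Quaternion.self_mul_star _
  rw [hsa] at h0
  have h2 := quat_coe_sum Finset.univ (fun i => normSq (M (Sum.inr ()) (Sum.inl i)))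
  rw [← h2] at h0
  have h3 : ((∑ i : Fin n, normSq (M (Sum.inr ()) (Sum.inl i))
      - normSq (M (Sum.inr ()) (Sum.inr ())) : ℝ) : ℍ[ℝ]) = ((-1 : ℝ) : ℍ[ℝ]) := by
    push_cast
    rw [sub_eq_add_neg]
    exact h0
  have h4 := Quaternion.coe_injective h3
  have h5 : ∀ x : ℍ[ℝ], normSq x = ‖x‖ ^ 2 := fun x => by
    rw [Quaternion.normSq_eq_norm_mul_self, sq]
  simp only [h5] at h4
  linarith [h4]

/-- column identity : if `Mᴴ J M = J` then `∑ ‖α i‖² = ‖a‖² - 1`. -/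
lemma col_sum {n : ℕ} {M : Matrix (Fin n ⊕ Unit) (Fin n ⊕ Unit) ℍ[ℝ]}
    (hM : Mᴴ * Jm n * M = Jm n) :
    ∑ i : Fin n, ‖M (Sum.inl i) (Sum.inr ())‖ ^ 2 = ‖M (Sum.inr ()) (Sum.inr ())‖ ^ 2 - 1 := by
  have h0 := congrFun (congrFun hM (Sum.inr ())) (Sum.inr ())
  rw [Jm_diag] at h0
  rw [Matrix.mul_apply] at h0
  simp only [Matrix.mul_diagonal, Matrix.conjTranspose_apply, Matrix.diagonal_apply_eq] at h0
  rw [Fintype.sum_sum_type] at h0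
  simp only [ee, Sum.elim_inl, Sum.elim_inr, mul_one, mul_neg_one, neg_mul,
    Fintype.sum_unique, PUnit.default_eq_unit] at h0
  have h1 : ∀ i : Fin n, star (M (Sum.inl i) (Sum.inr ())) * M (Sum.inl i) (Sum.inr ())
      = ((normSq (M (Sum.inl i) (Sum.inr ())) : ℝ) : ℍ[ℝ]) := fun i =>
    Quaternion.star_mul_self _
  rw [Finset.sum_congr rfl (fun i _ => h1 i)] at h0
  have hsa : star (M (Sum.inr ()) (Sum.inr ())) * M (Sum.inr ()) (Sum.inr ())
      = ((normSq (M (Sum.inr ()) (Sum.inr ())) : ℝ) : ℍ[ℝ]) := Quaternion.star_mul_self _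
  rw [hsa] at h0
  have h2 := quat_coe_sum Finset.univ (fun i => normSq (M (Sum.inl i) (Sum.inr ())))
  rw [← h2] at h0
  have h3 : ((∑ i : Fin n, normSq (M (Sum.inl i) (Sum.inr ()))
      - normSq (M (Sum.inr ()) (Sum.inr ())) : ℝ) : ℍ[ℝ]) = ((-1 : ℝ) : ℍ[ℝ]) := by
    push_cast
    rw [sub_eq_add_neg]
    exact h0
  have h4 := Quaternion.coe_injective h3
  have h5 : ∀ x : ℍ[ℝ], normSq x = ‖x‖ ^ 2 := fun x => by
    rw [Quaternion.normSq_eq_norm_mul_self, sq]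
  simp only [h5] at h4
  linarith [h4]

/-- the corner entry of the conjugated matrix. -/
lemma corner_entry {n : ℕ} (lam : Fin n ⊕ Unit → ℍ[ℝ])
    (M : Matrix (Fin n ⊕ Unit) (Fin n ⊕ Unit) ℍ[ℝ]) :
    (M * Matrix.diagonal lam * (Jm n * Mᴴ * Jm n)) (Sum.inr ()) (Sum.inr ())
      = M (Sum.inr ()) (Sum.inr ()) * lam (Sum.inr ()) * star (M (Sum.inr ()) (Sum.inr ()))
        - ∑ i : Fin n, M (Sum.inr ()) (Sum.inl i) * lam (Sum.inl i)
            * star (M (Sum.inr ()) (Sum.inl i)) := by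
  rw [Jm_diag]
  rw [Matrix.mul_apply]
  simp only [Matrix.mul_diagonal, Matrix.diagonal_mul, Matrix.conjTranspose_apply,
    Matrix.diagonal_apply_eq]
  rw [Fintype.sum_sum_type]
  simp only [ee, Sum.elim_inl, Sum.elim_inr, one_mul, mul_one, mul_neg_one, neg_mul, mul_neg,
    neg_neg, Fintype.sum_unique, PUnit.default_eq_unit]
  rw [sub_eq_add_neg, add_comm, ← Finset.sum_neg_distrib]

/-- conjugating preserves both invariants. -/
lemma inv_step {n : ℕ} (lam : Fin n ⊕ Unit → ℍ[ℝ]) (hlam : ∀ i, ‖lam i‖ = 1)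
    {M : Matrix (Fin n ⊕ Unit) (Fin n ⊕ Unit) ℍ[ℝ]}
    (h1 : Mᴴ * Jm n * M = Jm n) (h2 : M * Jm n * Mᴴ = Jm n) :
    (M * Matrix.diagonal lam * (Jm n * Mᴴ * Jm n))ᴴ * Jm n
        * (M * Matrix.diagonal lam * (Jm n * Mᴴ * Jm n)) = Jm n
    ∧ (M * Matrix.diagonal lam * (Jm n * Mᴴ * Jm n)) * Jm n
        * (M * Matrix.diagonal lam * (Jm n * Mᴴ * Jm n))ᴴ = Jm n := by
  have hJJ : Jm n * Jm n = 1 := Jm_mul_Jm n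
  have cJ : ∀ X : Matrix (Fin n ⊕ Unit) (Fin n ⊕ Unit) ℍ[ℝ], Jm n * (Jm n * X) = X := by
    intro X; rw [← Matrix.mul_assoc, hJJ, Matrix.one_mul]
  have c1 : ∀ X, Mᴴ * (Jm n * (M * X)) = Jm n * X := by
    intro X
    rw [← Matrix.mul_assoc, ← Matrix.mul_assoc, h1]
  have c2 : ∀ X, M * (Jm n * (Mᴴ * X)) = Jm n * X := by
    intro X
    rw [← Matrix.mul_assoc, ← Matrix.mul_assoc, h2]
  have cD1 : ∀ X, (Matrix.diagonal lam)ᴴ * (Jm n * (Matrix.diagonal lam * X)) = Jm n * X := by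
    intro X
    rw [← Matrix.mul_assoc, ← Matrix.mul_assoc, diag_unitary₁ lam hlam]
  have cD2 : ∀ X, Matrix.diagonal lam * (Jm n * ((Matrix.diagonal lam)ᴴ * X)) = Jm n * X := by
    intro X
    rw [← Matrix.mul_assoc, ← Matrix.mul_assoc, diag_unitary₂ lam hlam]
  have h2' : M * (Jm n * Mᴴ) = Jm n := by rw [← Matrix.mul_assoc]; exact h2
  constructor
  · simp only [Matrix.conjTranspose_mul, Matrix.conjTranspose_conjTranspose, Jm_conjT,
      Matrix.mul_assoc]
    rw [c1, cD1, cJ, c2, cJ]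
  · simp only [Matrix.conjTranspose_mul, Matrix.conjTranspose_conjTranspose, Jm_conjT,
      Matrix.mul_assoc]
    rw [cJ, c1, cJ, cD2, h2']

/-- one conjugation step contracts the corner entry. -/
lemma step_bound {n : ℕ} (lam : Fin n ⊕ Unit → ℍ[ℝ]) (hlam : ∀ i, ‖lam i‖ = 1) (δ : ℝ)
    (hδle : ∀ (i : Fin n) (u w : ℍ[ℝ]), u ≠ 0 → w ≠ 0 →
      ‖u * lam (Sum.inl i) * u⁻¹ - w * lam (Sum.inr ()) * w⁻¹‖ ^ 2 ≤ δ)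
    {M : Matrix (Fin n ⊕ Unit) (Fin n ⊕ Unit) ℍ[ℝ]} (h2 : M * Jm n * Mᴴ = Jm n) :
    ‖(M * Matrix.diagonal lam * (Jm n * Mᴴ * Jm n)) (Sum.inr ()) (Sum.inr ())‖ ^ 2 - 1
      ≤ ‖M (Sum.inr ()) (Sum.inr ())‖ ^ 2 * δ * (‖M (Sum.inr ()) (Sum.inr ())‖ ^ 2 - 1) := by
  have hrow := row_sum h2
  have hnorm : ‖M (Sum.inr ()) (Sum.inr ())‖ ^ 2
      - ∑ i : Fin n, ‖M (Sum.inr ()) (Sum.inl i)‖ ^ 2 = 1 := by linarith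
  have ha : M (Sum.inr ()) (Sum.inr ()) ≠ 0 := by
    intro h0
    have hS0 : 0 ≤ ∑ i : Fin n, ‖M (Sum.inr ()) (Sum.inl i)‖ ^ 2 :=
      Finset.sum_nonneg fun i _ => sq_nonneg _
    rw [h0, norm_zero] at hnorm
    nlinarith
  rw [corner_entry]
  exact quat_est _ _ _ _ (hlam _) (fun i => hlam _) hnorm δ (fun i hβ => by
    have := hδle i (M (Sum.inr ()) (Sum.inl i)) (M (Sum.inr ()) (Sum.inr ())) hβ ha
    rwa [norm_sub_rev] at this)

theorem stmt10 (n : ℕ) (h : Matrix (Fin n ⊕ Unit) (Fin n ⊕ Unit) ℍ[ℝ]) (hSp : h ∈ Sp n)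
    (lam : Fin n ⊕ Unit → ℍ[ℝ]) (hlam : ∀ i, ‖lam i‖ = 1)
    (δ : ℝ)
    (hδ : δ = sSup {r : ℝ | ∃ i : Fin n, ∃ u w : ℍ[ℝ], u ≠ 0 ∧ w ≠ 0 ∧
        r = ‖u * lam (Sum.inl i) * u⁻¹ - w * lam (Sum.inr ()) * w⁻¹‖ ^ 2})
    (hs : ℕ → Matrix (Fin n ⊕ Unit) (Fin n ⊕ Unit) ℍ[ℝ])
    (hs0 : hs 0 = h)
    (hsrec : ∀ k, hs (k + 1) = hs k * Matrix.diagonal lam * (Jm n * (hs k)ᴴ * Jm n))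
    (hsmall : ‖h (Sum.inr ()) (Sum.inr ())‖ ^ 2 * δ < 1) :
    (∀ k, ‖hs k (Sum.inr ()) (Sum.inr ())‖ ^ 2 - 1
        ≤ (‖h (Sum.inr ()) (Sum.inr ())‖ ^ 2 - 1)
          * (‖h (Sum.inr ()) (Sum.inr ())‖ ^ 2 * δ) ^ k)
    ∧ Tendsto (fun k => ‖hs k (Sum.inr ()) (Sum.inr ())‖) atTop (nhds 1)
    ∧ (∀ i : Fin n, Tendsto (fun k => hs k (Sum.inr ()) (Sum.inl i)) atTop (nhds 0))
    ∧ (∀ i : Fin n, Tendsto (fun k => hs k (Sum.inl i) (Sum.inr ())) atTop (nhds 0)) := by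
  -- the invariants
  have hSp' : hᴴ * Jm n * h = Jm n := hSp
  have hatop : ∀ k, (hs k)ᴴ * Jm n * hs k = Jm n ∧ hs k * Jm n * (hs k)ᴴ = Jm n := by
    intro k
    induction k with
    | zero =>
      rw [hs0]
      refine ⟨hSp', ?_⟩
      have hL : (Jm n * hᴴ * Jm n) * h = 1 := by
        rw [Matrix.mul_assoc (Jm n) hᴴ (Jm n), Matrix.mul_assoc (Jm n) (hᴴ * Jm n) h, hSp',
          Jm_mul_Jm]
      have hR : h * (Jm n * hᴴ * Jm n) = 1 := matrix_mul_eq_one_comm' hL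
      calc h * Jm n * hᴴ = h * Jm n * hᴴ * (Jm n * Jm n) := by
            rw [Jm_mul_Jm, Matrix.mul_one]
        _ = (h * (Jm n * hᴴ * Jm n)) * Jm n := by simp only [Matrix.mul_assoc]
        _ = 1 * Jm n := by rw [hR]
        _ = Jm n := Matrix.one_mul _
    | succ k ih =>
      rw [hsrec k]
      exact inv_step lam hlam ih.1 ih.2
  -- nonnegativity of `s k`
  have s_nonneg : ∀ k, 0 ≤ ‖hs k (Sum.inr ()) (Sum.inr ())‖ ^ 2 - 1 := by
    intro k
    have hrow := row_sum (hatop k).2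
    have hS0 : 0 ≤ ∑ i : Fin n, ‖hs k (Sum.inr ()) (Sum.inl i)‖ ^ 2 :=
      Finset.sum_nonneg fun i _ => sq_nonneg _
    linarith
  -- facts about δ
  have hbdd : BddAbove {r : ℝ | ∃ i : Fin n, ∃ u w : ℍ[ℝ], u ≠ 0 ∧ w ≠ 0 ∧
      r = ‖u * lam (Sum.inl i) * u⁻¹ - w * lam (Sum.inr ()) * w⁻¹‖ ^ 2} := by
    refine ⟨4, ?_⟩
    rintro r ⟨i, u, w, hu, hw, rfl⟩
    have h1 : ‖u * lam (Sum.inl i) * u⁻¹‖ = 1 := by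
      rw [norm_mul, norm_mul, hlam, norm_inv]
      field_simp [norm_ne_zero_iff.mpr hu]
    have h2 : ‖w * lam (Sum.inr ()) * w⁻¹‖ = 1 := by
      rw [norm_mul, norm_mul, hlam, norm_inv]
      field_simp [norm_ne_zero_iff.mpr hw]
    have h3 := norm_sub_le (u * lam (Sum.inl i) * u⁻¹) (w * lam (Sum.inr ()) * w⁻¹)
    rw [h1, h2] at h3
    nlinarith [norm_nonneg (u * lam (Sum.inl i) * u⁻¹ - w * lam (Sum.inr ()) * w⁻¹)]
  have hδ0 : 0 ≤ δ := by
    rcases Nat.eq_zero_or_pos n with hn | hn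
    · subst hn
      rw [hδ]
      have hempty : {r : ℝ | ∃ i : Fin 0, ∃ u w : ℍ[ℝ], u ≠ 0 ∧ w ≠ 0 ∧
          r = ‖u * lam (Sum.inl i) * u⁻¹ - w * lam (Sum.inr ()) * w⁻¹‖ ^ 2} = ∅ := by
        apply Set.eq_empty_iff_forall_notMem.mpr
        rintro r ⟨i, -⟩
        exact i.elim0
      rw [hempty, Real.sSup_empty]
    · have hmem : ‖(1:ℍ[ℝ]) * lam (Sum.inl ⟨0, hn⟩) * (1:ℍ[ℝ])⁻¹
          - (1:ℍ[ℝ]) * lam (Sum.inr ()) * (1:ℍ[ℝ])⁻¹‖ ^ 2 ∈ {r : ℝ | ∃ i : Fin n,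
          ∃ u w : ℍ[ℝ], u ≠ 0 ∧ w ≠ 0 ∧
          r = ‖u * lam (Sum.inl i) * u⁻¹ - w * lam (Sum.inr ()) * w⁻¹‖ ^ 2} :=
        ⟨⟨0, hn⟩, 1, 1, one_ne_zero, one_ne_zero, rfl⟩
      have hle := le_csSup hbdd hmem
      rw [← hδ] at hle
      have := sq_nonneg ‖(1:ℍ[ℝ]) * lam (Sum.inl ⟨0, hn⟩) * (1:ℍ[ℝ])⁻¹
          - (1:ℍ[ℝ]) * lam (Sum.inr ()) * (1:ℍ[ℝ])⁻¹‖
      linarith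
  have hδle : ∀ (i : Fin n) (u w : ℍ[ℝ]), u ≠ 0 → w ≠ 0 →
      ‖u * lam (Sum.inl i) * u⁻¹ - w * lam (Sum.inr ()) * w⁻¹‖ ^ 2 ≤ δ := by
    intro i u w hu hw
    rw [hδ]
    exact le_csSup hbdd ⟨i, u, w, hu, hw, rfl⟩
  -- main bound
  have hq0 : 0 ≤ ‖h (Sum.inr ()) (Sum.inr ())‖ ^ 2 * δ := mul_nonneg (sq_nonneg _) hδ0
  have hA0 : 0 ≤ ‖h (Sum.inr ()) (Sum.inr ())‖ ^ 2 - 1 := by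
    have := s_nonneg 0
    rwa [hs0] at this
  have key : ∀ k, ‖hs k (Sum.inr ()) (Sum.inr ())‖ ^ 2 - 1
      ≤ (‖h (Sum.inr ()) (Sum.inr ())‖ ^ 2 - 1)
        * (‖h (Sum.inr ()) (Sum.inr ())‖ ^ 2 * δ) ^ k := by
    intro k
    induction k with
    | zero => simp [hs0]
    | succ k ih =>
      have hstep := step_bound lam hlam δ hδle (hatop k).2
      rw [← hsrec k] at hstep
      have hqk : (‖h (Sum.inr ()) (Sum.inr ())‖ ^ 2 * δ) ^ k ≤ 1 :=
        pow_le_one₀ hq0 hsmall.le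
      have e0 : (‖h (Sum.inr ()) (Sum.inr ())‖ ^ 2 - 1)
          * (‖h (Sum.inr ()) (Sum.inr ())‖ ^ 2 * δ) ^ k
          ≤ ‖h (Sum.inr ()) (Sum.inr ())‖ ^ 2 - 1 := mul_le_of_le_one_right hA0 hqk
      have e1 : ‖hs k (Sum.inr ()) (Sum.inr ())‖ ^ 2 ≤ ‖h (Sum.inr ()) (Sum.inr ())‖ ^ 2 := by
        linarith [ih, e0]
      have e2 : ‖hs k (Sum.inr ()) (Sum.inr ())‖ ^ 2 * δ
            * (‖hs k (Sum.inr ()) (Sum.inr ())‖ ^ 2 - 1)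
          ≤ ‖h (Sum.inr ()) (Sum.inr ())‖ ^ 2 * δ
            * (‖hs k (Sum.inr ()) (Sum.inr ())‖ ^ 2 - 1) :=
        mul_le_mul_of_nonneg_right (mul_le_mul_of_nonneg_right e1 hδ0) (s_nonneg k)
      have e3 : ‖h (Sum.inr ()) (Sum.inr ())‖ ^ 2 * δ
            * (‖hs k (Sum.inr ()) (Sum.inr ())‖ ^ 2 - 1)
          ≤ ‖h (Sum.inr ()) (Sum.inr ())‖ ^ 2 * δ
            * ((‖h (Sum.inr ()) (Sum.inr ())‖ ^ 2 - 1)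
              * (‖h (Sum.inr ()) (Sum.inr ())‖ ^ 2 * δ) ^ k) :=
        mul_le_mul_of_nonneg_left ih hq0
      have e4 : ‖h (Sum.inr ()) (Sum.inr ())‖ ^ 2 * δ
            * ((‖h (Sum.inr ()) (Sum.inr ())‖ ^ 2 - 1)
              * (‖h (Sum.inr ()) (Sum.inr ())‖ ^ 2 * δ) ^ k)
          = (‖h (Sum.inr ()) (Sum.inr ())‖ ^ 2 - 1)
            * (‖h (Sum.inr ()) (Sum.inr ())‖ ^ 2 * δ) ^ (k + 1) := by ring
      linarith [hstep, e2, e3, e4.le, e4.ge]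
  -- limits
  have hq_tend : Tendsto (fun k : ℕ => (‖h (Sum.inr ()) (Sum.inr ())‖ ^ 2 * δ) ^ k) atTop
      (nhds 0) := tendsto_pow_atTop_nhds_zero_of_lt_one hq0 hsmall
  have hs_tend : Tendsto (fun k => ‖hs k (Sum.inr ()) (Sum.inr ())‖ ^ 2 - 1) atTop (nhds 0) := by
    have hg : Tendsto (fun k : ℕ => (‖h (Sum.inr ()) (Sum.inr ())‖ ^ 2 - 1)
        * (‖h (Sum.inr ()) (Sum.inr ())‖ ^ 2 * δ) ^ k) atTop (nhds 0) := by
      simpa using hq_tend.const_mul (‖h (Sum.inr ()) (Sum.inr ())‖ ^ 2 - 1)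
    exact squeeze_zero s_nonneg key hg
  have hn2 : Tendsto (fun k => ‖hs k (Sum.inr ()) (Sum.inr ())‖ ^ 2) atTop (nhds 1) := by
    have := hs_tend.add (tendsto_const_nhds (x := (1:ℝ)))
    simpa using this
  have goal2 : Tendsto (fun k => ‖hs k (Sum.inr ()) (Sum.inr ())‖) atTop (nhds 1) := by
    have h1 := (Real.continuous_sqrt.tendsto 1).comp hn2
    rw [Real.sqrt_one] at h1
    exact h1.congr fun k => Real.sqrt_sq (norm_nonneg _)
  refine ⟨key, goal2, ?_, ?_⟩
  · intro i
    have hb2 : ∀ k, ‖hs k (Sum.inr ()) (Sum.inl i)‖ ^ 2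
        ≤ ‖hs k (Sum.inr ()) (Sum.inr ())‖ ^ 2 - 1 := by
      intro k
      have hrow := row_sum (hatop k).2
      have hle : ‖hs k (Sum.inr ()) (Sum.inl i)‖ ^ 2
          ≤ ∑ j : Fin n, ‖hs k (Sum.inr ()) (Sum.inl j)‖ ^ 2 := by
        simpa using Finset.single_le_sum (f := fun j => ‖hs k (Sum.inr ()) (Sum.inl j)‖ ^ 2)
          (fun j _ => sq_nonneg _) (Finset.mem_univ i)
      linarith
    have hsq : Tendsto (fun k => ‖hs k (Sum.inr ()) (Sum.inl i)‖ ^ 2) atTop (nhds 0) :=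
      squeeze_zero (fun k => sq_nonneg _) hb2 hs_tend
    have hnrm : Tendsto (fun k => ‖hs k (Sum.inr ()) (Sum.inl i)‖) atTop (nhds 0) := by
      have h1 := (Real.continuous_sqrt.tendsto 0).comp hsq
      rw [Real.sqrt_zero] at h1
      exact h1.congr fun k => Real.sqrt_sq (norm_nonneg _)
    exact tendsto_zero_iff_norm_tendsto_zero.mpr hnrm
  · intro i
    have hb2 : ∀ k, ‖hs k (Sum.inl i) (Sum.inr ())‖ ^ 2
        ≤ ‖hs k (Sum.inr ()) (Sum.inr ())‖ ^ 2 - 1 := by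
      intro k
      have hcol := col_sum (hatop k).1
      have hle : ‖hs k (Sum.inl i) (Sum.inr ())‖ ^ 2
          ≤ ∑ j : Fin n, ‖hs k (Sum.inl j) (Sum.inr ())‖ ^ 2 := by
        simpa using Finset.single_le_sum (f := fun j => ‖hs k (Sum.inl j) (Sum.inr ())‖ ^ 2)
          (fun j _ => sq_nonneg _) (Finset.mem_univ i)
      linarith
    have hsq : Tendsto (fun k => ‖hs k (Sum.inl i) (Sum.inr ())‖ ^ 2) atTop (nhds 0) :=
      squeeze_zero (fun k => sq_nonneg _) hb2 hs_tend
    have hnrm : Tendsto (fun k => ‖hs k (Sum.inl i) (Sum.inr ())‖) atTop (nhds 0) := by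
      have h1 := (Real.continuous_sqrt.tendsto 0).comp hsq
      rw [Real.sqrt_zero] at h1
      exact h1.congr fun k => Real.sqrt_sq (norm_nonneg _)
    exact tendsto_zero_iff_norm_tendsto_zero.mpr hnrm
end
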